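/- arXiv:math/0204293 — 2 statements merged into one kernel-verified Lean document; each statement's English description precedes it below -/
import Mathlib

section
/- Let (D,φ) be an isocrystal over K of dimension d, F^• a filtration of D, and M a lattice in D adapted to F^•, i.e. M = φ(Σ_i p^{-i}(F^i ∩ M)). Suppose u_1,…,u_d is a W(k)-basis of M adapted to the filtration, namely there are integers μ_1 ≥ μ_2 ≥ … ≥ μ_d such that F^i ∩ M = ⊕_{r : μ_r ≥ i} W(k)·u_r for all i ∈ ℤ (so (μ_1,…,μ_d) is the type of F^•). Then the elements e_r := p^{-μ_r}·φ(u_r) form a W(k)-basis of M and p^{μ_1}e_1,…,p^{μ_d}e_d form a W(k)-basis of φ(M); in particular the type of the lattice M equals the type of the filtration F^•. -/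
/-!
Setting: `p` a prime, `k` a perfect field of characteristic `p`, `W(k)` the Witt vectors,
`K(p, k) = Frac(W(k))` and `φ(p, k) : K(p, k) →+* K(p, k)` the automorphism induced by the
Witt-vector Frobenius.  An isocrystal is a finite-dimensional `K(p, k)`-vector space `D`
together with a bijective `φ(p, k)`-semilinear map `φ : D → D`.
-/

open WittVector Module Isocrystal Pointwise

noncomputable section

variable (p : ℕ) [Fact p.Prime] (k : Type) [Field k] [CharP k p] [PerfectRing k p]
variable (D : Type) [AddCommGroup D] [Module K(p, k) D]

/-- `v x = n`, where `v` is the `p`-adic valuation on `K(p, k)` normalized by `v p = 1`: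
`x` equals `p ^ n` times a unit of `W(k)`. -/
def HasVal (x : K(p, k)) (n : ℤ) : Prop :=
  ∃ u : (WittVector p k)ˣ,
    x = (p : K(p, k)) ^ n * algebraMap (WittVector p k) K(p, k) (u : WittVector p k)

/-- A decreasing, exhaustive and separated `ℤ`-indexed filtration by subspaces. -/
def IsZFiltration (F : ℤ → Submodule K(p, k) D) : Prop :=
  Antitone F ∧ (∀ x : D, ∃ i : ℤ, x ∈ F i) ∧ (∀ x : D, (∀ i : ℤ, x ∈ F i) → x = 0)

/-- The filtration `F` is of type `μ`: the `i`-th graded piece `F i / F (i+1)` has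
dimension `#{j | μ j = i}`. -/
def FiltrationOfType {d : ℕ} (F : ℤ → Submodule K(p, k) D) (μ : Fin d → ℤ) : Prop :=
  IsZFiltration p k D F ∧
    ∀ i : ℤ, finrank K(p, k) (F i) =
      finrank K(p, k) (F (i + 1)) + (Finset.univ.filter fun j : Fin d => μ j = i).card

/-- The Hodge number `t_H(F) = ∑ i, i · dim (F i / F (i+1))`. -/
def tH (F : ℤ → Submodule K(p, k) D) : ℤ :=
  ∑ᶠ i : ℤ, i * ((finrank K(p, k) (F i) : ℤ) - (finrank K(p, k) (F (i + 1)) : ℤ))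

/-- The filtration `F` is weakly admissible for the isocrystal `(D, φ)`:
`t_H(F) = t_N(D)` (the valuation of the determinant of any matrix of `φ`), and for every
`φ`-stable subspace `D'`, the Hodge number of the induced filtration is `≤ t_N(D')`. -/
def WeaklyAdmissible (φ : D → D) (F : ℤ → Submodule K(p, k) D) : Prop :=
  (∀ b : Basis (Fin (finrank K(p, k) D)) K(p, k) D,
      HasVal p k (Matrix.det fun i j => b.repr (φ (b j)) i) (tH p k D F)) ∧
  ∀ D' : Submodule K(p, k) D, (∀ x ∈ D', φ x ∈ D') →
    ∀ b' : Basis (Fin (finrank K(p, k) D')) K(p, k) D',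
    ∀ A : Matrix (Fin (finrank K(p, k) D')) (Fin (finrank K(p, k) D')) K(p, k),
      (∀ j, φ (b' j : D) = ∑ i, A i j • (b' i : D)) →
      ∀ n : ℤ, HasVal p k A.det n →
        tH p k D' (fun i => (F i).comap D'.subtype) ≤ n

/-- `(D, φ)` has Newton vector `ν`: `ν` is nonincreasing, `s • ν` is integral for some
`s ≥ 1`, and some `K(p, k)`-basis `b` satisfies `φ^[s] (b i) = p ^ (s • ν i) • b i`. -/
def HasNewtonVector {d : ℕ} (φ : D → D) (ν : Fin d → ℚ) : Prop :=
  Antitone ν ∧ ∃ (s : ℕ) (m : Fin d → ℤ) (b : Basis (Fin d) K(p, k) D),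
    1 ≤ s ∧ (∀ i, (m i : ℚ) = s * ν i) ∧
      ∀ i, φ^[s] (b i) = (p : K(p, k)) ^ (m i) • b i

/-- Dominance order `μ ≥ ν` on nonincreasing vectors: every partial sum of `μ` is at least
the corresponding partial sum of `ν`, with equal total sums. -/
def Dominates {d : ℕ} (μ ν : Fin d → ℚ) : Prop :=
  (∀ r : ℕ, r < d →
      (∑ i ∈ Finset.univ.filter fun i : Fin d => (i : ℕ) < r, ν i) ≤
        ∑ i ∈ Finset.univ.filter fun i : Fin d => (i : ℕ) < r, μ i) ∧
    (∑ i, μ i) = ∑ i, ν i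

variable [Module (WittVector p k) D] [IsScalarTower (WittVector p k) K(p, k) D]

/-- A `W(k)`-lattice in `D`: a finitely generated `W(k)`-submodule spanning `D` over `K(p, k)`. -/
def IsLattice (M : Submodule (WittVector p k) D) : Prop :=
  M.FG ∧ Submodule.span K(p, k) (M : Set D) = ⊤

/-- `v : ι → D` is a `W(k)`-basis of the `W(k)`-submodule `M`. -/
def IsWBasisOf {ι : Type} (v : ι → D) (M : Submodule (WittVector p k) D) : Prop :=
  (∀ i, v i ∈ M) ∧ LinearIndependent (WittVector p k) v ∧
    Submodule.span (WittVector p k) (Set.range v) = M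

/-- The lattice `M` has type `μ`: there is a `W(k)`-basis `e` of `M` such that
`(p ^ μ i • e i)` is a `W(k)`-basis of `φ(M)`. -/
def LatticeOfType {d : ℕ} (φ : D → D) (M : Submodule (WittVector p k) D)
    (μ : Fin d → ℤ) : Prop :=
  ∃ e : Fin d → D, IsWBasisOf p k D e M ∧
    IsWBasisOf p k D (fun i => (p : K(p, k)) ^ (μ i) • e i)
      (Submodule.span (WittVector p k) (φ '' (M : Set D)))


section AdaptedAux

lemma phi_algebraMap (w : WittVector p k) :
    φ(p, k) (algebraMap (WittVector p k) K(p, k) w)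
      = algebraMap (WittVector p k) K(p, k) (frobeniusEquiv p k w) :=
  IsFractionRing.ringEquivOfRingEquiv_algebraMap (frobeniusEquiv p k) w

lemma phi_p_zpow (n : ℤ) : φ(p, k) ((p : K(p, k)) ^ n) = (p : K(p, k)) ^ n := by
  rw [map_zpow₀, map_natCast]

lemma phi_wsmul (φ : D →ₛₗ[φ(p, k)] D) (w : WittVector p k) (x : D) :
    φ (w • x) = frobeniusEquiv p k w • φ x := by
  rw [← algebraMap_smul K(p, k) w x, φ.map_smulₛₗ, phi_algebraMap, algebraMap_smul]

lemma smul_phi_span_mem (φ : D →ₛₗ[φ(p, k)] D) (c : K(p, k)) (s : Set D)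
    (N : Submodule (WittVector p k) D) (hgen : ∀ x ∈ s, c • φ x ∈ N) :
    ∀ y ∈ Submodule.span (WittVector p k) s, c • φ y ∈ N := by
  intro y hy
  induction hy using Submodule.span_induction with
  | mem x hx => exact hgen x hx
  | zero => simpa using N.zero_mem
  | add a b _ _ ha hb => rw [map_add, smul_add]; exact N.add_mem ha hb
  | smul w a _ ha =>
    rw [phi_wsmul, smul_comm]
    exact N.smul_mem _ ha

lemma pzpow_smul_mem (N : Submodule (WittVector p k) D) {n : ℤ} (hn : 0 ≤ n) {x : D}
    (hx : x ∈ N) : (p : K(p, k)) ^ n • x ∈ N := by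
  have h : (p : K(p, k)) ^ n
      = algebraMap (WittVector p k) K(p, k) ((p : WittVector p k) ^ n.toNat) := by
    rw [map_pow, map_natCast, ← zpow_natCast, Int.toNat_of_nonneg hn]
  rw [h, algebraMap_smul]
  exact N.smul_mem _ hx

end AdaptedAux

/-- **Lemma 1.4** (Fontaine–Rapoport). Let `M` be a lattice adapted to the filtration `F`,
i.e. `M = φ(∑ i, p^(-i) (F^i ∩ M))`, and let `u` be a `W(k)`-basis of `M` adapted to `F`,
with nonincreasing jumps `μ`, i.e. `F^i ∩ M = ⊕_{r : μ r ≥ i} W(k)·u r` for all `i`.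
Then `e r := p^(-μ r) • φ (u r)` is a `W(k)`-basis of `M` and `(p^(μ r) • e r)` is a
`W(k)`-basis of `φ(M)`; in particular the type of `M` equals the type `μ` of `F`. -/
theorem adapted_lattice_type_eq_filtration_type
    [FiniteDimensional K(p, k) D]
    (φ : D →ₛₗ[φ(p, k)] D) (hφ : Function.Bijective φ)
    (F : ℤ → Submodule K(p, k) D) (hF : IsZFiltration p k D F)
    (M : Submodule (WittVector p k) D) (hM : IsLattice p k D M)
    (hadapted : M = Submodule.span (WittVector p k)
      ((⇑φ) '' (⋃ i : ℤ, (p : K(p, k)) ^ (-i) • ((F i : Set D) ∩ (M : Set D)))))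
    (d : ℕ) (u : Fin d → D) (hu : IsWBasisOf p k D u M)
    (μ : Fin d → ℤ) (hμ : Antitone μ)
    (hadaptedBasis : ∀ i : ℤ, (F i).restrictScalars (WittVector p k) ⊓ M =
      Submodule.span (WittVector p k) (u '' {r : Fin d | i ≤ μ r})) :
    IsWBasisOf p k D (fun r => (p : K(p, k)) ^ (-μ r) • φ (u r)) M ∧
    IsWBasisOf p k D
      (fun r => (p : K(p, k)) ^ (μ r) • ((p : K(p, k)) ^ (-μ r) • φ (u r)))
      (Submodule.span (WittVector p k) ((⇑φ) '' (M : Set D))) := by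
  classical
  have hp0 : (p : K(p, k)) ≠ 0 := FractionRing.p_nonzero p k
  set e : Fin d → D := fun r => (p : K(p, k)) ^ (-μ r) • φ (u r) with he
  -- u is K-linearly independent
  have huK : LinearIndependent K(p, k) u :=
    hu.2.1.localization K(p, k) (nonZeroDivisors (WittVector p k))
  -- φ ∘ u is K-linearly independent
  have hφuK : LinearIndependent K(p, k) fun r => φ (u r) := by
    have h := huK.map_of_injective_injective
      (fun c => (FractionRing.frobenius p k).symm c) φ.toAddMonoidHom
      (fun c hc => by
        have h2 := congrArg (FractionRing.frobenius p k) hc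
        simpa using h2)
      (fun m hm => hφ.1 (by simpa using hm))
      (fun c m => by
        show φ _ = _
        rw [φ.map_smulₛₗ]
        congr 1
        exact (FractionRing.frobenius p k).apply_symm_apply c)
    exact h
  -- e is K-linearly independent
  have heK : LinearIndependent K(p, k) e := by
    have h := hφuK.units_smul fun r => Units.mk0 ((p : K(p, k)) ^ (-μ r)) (zpow_ne_zero _ hp0)
    exact h
  -- W-smul on K is injective
  have hinj : Function.Injective fun (w : WittVector p k) => w • (1 : K(p, k)) := by
    intro a b hab
    apply IsFractionRing.injective (WittVector p k) K(p, k)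
    simpa [Algebra.smul_def] using hab
  have heW : LinearIndependent (WittVector p k) e := heK.restrict_scalars hinj
  have hφuW : LinearIndependent (WittVector p k) fun r => φ (u r) :=
    hφuK.restrict_scalars hinj
  -- each u r lies in F (μ r) ⊓ M
  have hur_mem : ∀ r, u r ∈ (F (μ r)).restrictScalars (WittVector p k) ⊓ M := by
    intro r
    rw [hadaptedBasis (μ r)]
    exact Submodule.subset_span (Set.mem_image_of_mem u (le_refl (μ r)))
  -- each e r ∈ M
  have heM : ∀ r, e r ∈ M := by
    intro r
    have h1 : (p : K(p, k)) ^ (-μ r) • u r ∈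
        (⋃ i : ℤ, (p : K(p, k)) ^ (-i) • ((F i : Set D) ∩ (M : Set D))) :=
      Set.mem_iUnion.2 ⟨μ r, Set.smul_mem_smul_set
        ⟨(Submodule.mem_inf.1 (hur_mem r)).1, (Submodule.mem_inf.1 (hur_mem r)).2⟩⟩
    have h2 : φ ((p : K(p, k)) ^ (-μ r) • u r) ∈ M := by
      rw [hadapted]
      exact Submodule.subset_span (Set.mem_image_of_mem _ h1)
    rw [φ.map_smulₛₗ, phi_p_zpow] at h2
    exact h2
  have hspan_le : Submodule.span (WittVector p k) (Set.range e) ≤ M :=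
    Submodule.span_le.2 (Set.range_subset_iff.2 heM)
  have hle_span : M ≤ Submodule.span (WittVector p k) (Set.range e) := by
    rw [hadapted]
    apply Submodule.span_le.2
    rintro x ⟨z, hz, rfl⟩
    obtain ⟨i, hzi⟩ := Set.mem_iUnion.1 hz
    rw [Set.mem_smul_set] at hzi
    obtain ⟨y, hy, rfl⟩ := hzi
    have hy' : y ∈ Submodule.span (WittVector p k) (u '' {r : Fin d | i ≤ μ r}) := by
      rw [← hadaptedBasis i]
      exact Submodule.mem_inf.2 ⟨hy.1, hy.2⟩
    have hmem : φ ((p : K(p, k)) ^ (-i) • y)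
        = (p : K(p, k)) ^ (-i) • φ y := by
      rw [φ.map_smulₛₗ, phi_p_zpow]
    rw [SetLike.mem_coe, hmem]
    refine smul_phi_span_mem p k D φ _ _ _ ?_ y hy'
    rintro x ⟨r, hr, rfl⟩
    have hcalc : (p : K(p, k)) ^ (μ r - i) • e r = (p : K(p, k)) ^ (-i) • φ (u r) := by
      simp only [he, smul_smul, ← zpow_add₀ hp0]
      congr 1
      ring_nf
    rw [← hcalc]
    exact pzpow_smul_mem p k D _ (by simp only [Set.mem_setOf_eq] at hr; omega)
      (Submodule.subset_span (Set.mem_range_self r))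
  have hbasis1 : IsWBasisOf p k D e M := ⟨heM, heW, le_antisymm hspan_le hle_span⟩
  refine ⟨hbasis1, ?_⟩
  have hfe : (fun r => (p : K(p, k)) ^ (μ r) • ((p : K(p, k)) ^ (-μ r) • φ (u r)))
      = fun r => φ (u r) := by
    funext r
    rw [smul_smul, ← zpow_add₀ hp0, add_neg_cancel, zpow_zero, one_smul]
  rw [hfe]
  refine ⟨fun r => Submodule.subset_span (Set.mem_image_of_mem _ (hu.1 r)), hφuW, ?_⟩
  apply le_antisymm
  · exact Submodule.span_le.2 (Set.range_subset_iff.2 fun r =>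
      Submodule.subset_span (Set.mem_image_of_mem _ (hu.1 r)))
  · apply Submodule.span_le.2
    rintro x ⟨y, hyM, rfl⟩
    have hy' : y ∈ Submodule.span (WittVector p k) (Set.range u) := by
      rw [hu.2.2]; exact hyM
    have h := smul_phi_span_mem p k D φ 1 (Set.range u)
      (Submodule.span (WittVector p k) (Set.range fun r => φ (u r)))
      (by rintro x ⟨r, rfl⟩
          simpa using Submodule.subset_span (Set.mem_range_self r)) y hy'
    simpa using h
end
end

section
/- Let k = 𝔽_p, so that K = Frac(W(𝔽_p)) and the Frobenius automorphism σ of K is the identity. Let D = K² and φ = id_D (a bijective σ-semilinear map, so (D,φ) is an isocrystal with Newton vector ν = (0,0)). For every integer r ≥ 1, although (r,−r) ≥ (0,0) in the dominance order, there exists no weakly admissible filtration of type (r,−r) on (D,φ). -/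
/-!
Setting: `p` a prime, `k` a perfect field of characteristic `p`, `W(k)` the Witt vectors,
`K(p, k) = Frac(W(k))` and `φ(p, k) : K(p, k) →+* K(p, k)` the automorphism induced by the
Witt-vector Frobenius.  An isocrystal is a finite-dimensional `K(p, k)`-vector space `D`
together with a bijective `φ(p, k)`-semilinear map `φ : D → D`.
-/

open WittVector Module Isocrystal

noncomputable section

variable (p : ℕ) [Fact p.Prime] (k : Type) [Field k] [CharP k p] [PerfectRing k p]
variable (D : Type) [AddCommGroup D] [Module K(p, k) D]

/-- **Counterexample** (Fontaine–Rapoport, §1, Remarque). Take `k = 𝔽_p`, so that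
`K = Frac(W(𝔽_p))` and the Frobenius `σ` of `K` is the identity; let `D = K²` and `φ = id`
(an isocrystal with Newton vector `(0, 0)`).  For every integer `r ≥ 1`, although
`(r, -r) ≥ (0, 0)` in the dominance order, there is no weakly admissible filtration of
type `(r, -r)` on `(D, φ)`.  (So Theorems 1 and 2 fail for non-algebraically-closed `k`.) -/
theorem no_weakly_admissible_filtration_over_prime_field
    (r : ℤ) (hr : 1 ≤ r) :
    WittVector.FractionRing.frobeniusRingHom p (ZMod p) = RingHom.id K(p, ZMod p) ∧
    HasNewtonVector p (ZMod p) (Fin 2 → K(p, ZMod p))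
      (id : (Fin 2 → K(p, ZMod p)) → Fin 2 → K(p, ZMod p)) ![0, 0] ∧
    Dominates (fun i => ((![r, -r] : Fin 2 → ℤ) i : ℚ)) ![0, 0] ∧
    ¬ ∃ F : ℤ → Submodule K(p, ZMod p) (Fin 2 → K(p, ZMod p)),
        FiltrationOfType p (ZMod p) (Fin 2 → K(p, ZMod p)) F ![r, -r] ∧
        WeaklyAdmissible p (ZMod p) (Fin 2 → K(p, ZMod p)) id F := by
  refine ⟨?_, ?_, ?_, ?_⟩
  · -- Frobenius is the identity on K(p, 𝔽_p)
    apply IsLocalization.ringHom_ext (nonZeroDivisors (WittVector p (ZMod p)))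
    ext x
    simp [WittVector.FractionRing.frobeniusRingHom, WittVector.FractionRing.frobenius,
      WittVector.frobeniusEquiv, WittVector.frobenius_zmodp]
  · -- Newton vector (0, 0)
    refine ⟨?_, 1, 0, Pi.basisFun _ _, le_refl 1, ?_, ?_⟩
    · intro a b _
      fin_cases a <;> fin_cases b <;> norm_num
    · intro i
      fin_cases i <;> simp
    · intro i
      simp
  · -- dominance (r, -r) ≥ (0, 0)
    constructor
    · intro s hs
      interval_cases s
      · have h1 : (Finset.univ.filter fun i : Fin 2 => (i : ℕ) < 0) = ∅ := by decide
        rw [h1]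
        simp
      · have h1 : (Finset.univ.filter fun i : Fin 2 => (i : ℕ) < 1) = {0} := by decide
        rw [h1]
        simp only [Finset.sum_singleton, Matrix.cons_val_zero]
        have h0 : (0 : ℚ) ≤ (r : ℚ) := by exact_mod_cast (by omega : (0:ℤ) ≤ r)
        simpa using h0
    · simp [Fin.sum_univ_two]
  · -- no weakly admissible filtration of type (r, -r)
    rintro ⟨F, ⟨⟨hmono, _hexh, hsep⟩, hdim⟩, hWA⟩
    have hcard : ∀ i : ℤ, (Finset.univ.filter fun j : Fin 2 => ![r, -r] j = i).card
        = (if r = i then 1 else 0) + (if -r = i then 1 else 0) := by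
      intro i
      rw [Finset.card_filter, Fin.sum_univ_two]
      rfl
    have hd0 : ∀ i : ℤ, i ≠ r → i ≠ -r →
        finrank K(p, ZMod p) (F i) = finrank K(p, ZMod p) (F (i + 1)) := by
      intro i h1 h2
      have h := hdim i
      rw [hcard i, if_neg (fun h' => h1 h'.symm), if_neg (fun h' => h2 h'.symm)] at h
      simpa using h
    have htop : ∀ n : ℕ, F (r + 1 + n) = F (r + 1) := by
      intro n
      induction n with
      | zero => simp
      | succ n ih =>
        have harg : r + 1 + ((n : ℤ) + 1) = (r + 1 + n) + 1 := by ring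
        have hle : F ((r + 1 + n) + 1) ≤ F (r + 1 + n) := hmono (by omega)
        have heq : finrank K(p, ZMod p) (F (r + 1 + n))
            = finrank K(p, ZMod p) (F ((r + 1 + n) + 1)) :=
          hd0 _ (by omega) (by omega)
        have : F ((r + 1 + n) + 1) = F (r + 1 + n) :=
          Submodule.eq_of_le_of_finrank_eq hle heq.symm
        push_cast
        rw [harg, this, ih]
    have hbot : F (r + 1) = ⊥ := by
      apply (Submodule.eq_bot_iff _).2
      intro x hx
      apply hsep
      intro i
      rcases le_or_gt i (r + 1) with h | h
      · exact hmono h hx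
      · have hi : i = r + 1 + ((i - (r + 1)).toNat : ℤ) := by omega
        rw [hi, htop]
        exact hx
    have hFi0 : ∀ i : ℤ, r + 1 ≤ i → F i = ⊥ := by
      intro i hi
      have h : i = r + 1 + ((i - (r + 1)).toNat : ℤ) := by omega
      rw [h, htop, hbot]
    have hdr : finrank K(p, ZMod p) (F r) = 1 := by
      have h := hdim r
      rw [hcard r, if_pos rfl, if_neg (by omega), hbot] at h
      simpa using h
    -- apply weak admissibility to the line D' = F r
    have hstable : ∀ x ∈ F r, id x ∈ F r := fun x hx => hx
    have hcond : ∀ j, id ((Module.finBasis K(p, ZMod p) (F r) j : Fin 2 → K(p, ZMod p))) =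
        ∑ i, (1 : Matrix (Fin (finrank K(p, ZMod p) (F r)))
            (Fin (finrank K(p, ZMod p) (F r))) K(p, ZMod p)) i j •
          (Module.finBasis K(p, ZMod p) (F r) i : Fin 2 → K(p, ZMod p)) := by
      intro j
      simp [Matrix.one_apply, ite_smul, zero_smul]
    have hv : HasVal p (ZMod p)
        (Matrix.det (1 : Matrix (Fin (finrank K(p, ZMod p) (F r)))
          (Fin (finrank K(p, ZMod p) (F r))) K(p, ZMod p))) 0 := by
      rw [Matrix.det_one]
      exact ⟨1, by simp⟩
    have key := hWA.2 (F r) hstable (Module.finBasis K(p, ZMod p) (F r)) 1 hcond 0 hv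
    -- compute the Hodge number of the induced filtration: it is r
    have hcom : ∀ i : ℤ, finrank K(p, ZMod p) ((F i).comap (F r).subtype)
        = if i ≤ r then 1 else 0 := by
      intro i
      split
      · next h =>
        have heq : (F i).comap (F r).subtype = ⊤ :=
          Submodule.comap_subtype_eq_top.2 (hmono h)
        rw [heq, finrank_top]
        exact hdr
      · next h =>
        have heq : F i = ⊥ := hFi0 i (by omega)
        rw [heq, Submodule.comap_bot, Submodule.ker_subtype, finrank_bot]
    have htH : tH p (ZMod p) (F r) (fun i => (F i).comap (F r).subtype) = r := by
      unfold tH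
      rw [finsum_eq_single _ r]
      · rw [hcom, hcom, if_pos (le_refl r), if_neg (by omega)]
        ring
      · intro i hi
        rw [hcom, hcom]
        rcases lt_or_gt_of_ne hi with h | h
        · rw [if_pos (by omega), if_pos (by omega)]
          ring
        · rw [if_neg (by omega), if_neg (by omega)]
          ring
    rw [htH] at key
    omega
end
end
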